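/- Let n ≥ 1 be an integer and let u₁, …, uₙ, v₁, …, vₙ ≥ 1 and N ≥ 0 be integers with v₁ + ⋯ + vₙ ≥ N + 1. Then the function (x₁, …, xₙ) ↦ x₁^{u₁−1}⋯xₙ^{uₙ−1}(1−x₁)^{v₁−1}⋯(1−xₙ)^{vₙ−1}/(1 − x₁⋯xₙ)^N is Lebesgue-integrable on (0,1)ⁿ, and there exist rational numbers a₀, a₂, a₃, …, aₙ such that ∫_{(0,1)ⁿ} x₁^{u₁−1}⋯xₙ^{uₙ−1}(1−x₁)^{v₁−1}⋯(1−xₙ)^{vₙ−1}/(1 − x₁⋯xₙ)^N dx₁⋯dxₙ = a₀ + a₂ζ(2) + a₃ζ(3) + ⋯ + aₙζ(n). -/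

import Mathlib

open MeasureTheory

/-- The open unit cube `(0,1)^n` in `ℝ^n`. -/
def unitCube (n : ℕ) : Set (Fin n → ℝ) := Set.univ.pi fun _ => Set.Ioo (0 : ℝ) 1

/-- `ζ(k) = Σ_{m=1}^∞ m^{-k}`. -/
noncomputable def zetaVal (k : ℕ) : ℝ := ∑' m : ℕ, 1 / ((m : ℝ) + 1) ^ k



open MeasureTheory Polynomial Filter Topology intervalIntegral

noncomputable section


lemma fact_mul_prod (a b : ℕ) :
    a.factorial * ∏ t ∈ Finset.range b, (a + 1 + t) = (a + b).factorial := by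
  induction b with
  | zero => simp
  | succ b ih =>
    rw [Finset.prod_range_succ, ← mul_assoc, ih, show a + (b+1) = (a + b) + 1 by ring,
      Nat.factorial_succ]
    ring

lemma choose_mul_fact (e m : ℕ) :
    (m + e).choose e * e.factorial = ∏ s ∈ Finset.range e, (m + 1 + s) := by
  have h1 := fact_mul_prod m e
  have h2 := Nat.choose_mul_factorial_mul_factorial (Nat.le_add_left e m)
  rw [Nat.add_sub_cancel] at h2
  have hm : 0 < m.factorial := Nat.factorial_pos m
  nlinarith [h1, h2]

lemma choose_cast_eq (e m : ℕ) :
    ((m + e).choose e : ℚ) = (∏ s ∈ Finset.range e, ((m:ℚ) + 1 + s)) / (e.factorial : ℚ) := by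
  have h := choose_mul_fact e m
  have : ((m + e).choose e * e.factorial : ℚ) = ∏ s ∈ Finset.range e, ((m:ℚ) + 1 + s) := by
    exact_mod_cast congrArg (Nat.cast : ℕ → ℚ) h
  rw [eq_div_iff (by exact_mod_cast Nat.factorial_ne_zero e)]
  push_cast at this ⊢
  linarith

lemma beta_frac_eq (Uv Vv m : ℕ) :
    ((Uv + m).factorial * Vv.factorial : ℚ) / ((Uv + m) + Vv + 1).factorial
      = (Vv.factorial : ℚ) / ∏ t ∈ Finset.range (Vv + 1), ((m:ℚ) + (Uv + 1 + t)) := by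
  have h := fact_mul_prod (Uv + m) (Vv + 1)
  have hcast : ((Uv + m).factorial : ℚ) * ∏ t ∈ Finset.range (Vv + 1), ((m:ℚ) + (Uv + 1 + t))
      = (((Uv + m) + (Vv + 1)).factorial : ℚ) := by
    have := congrArg (Nat.cast : ℕ → ℚ) h
    push_cast at this
    rw [← this]
    congr 1
    refine Finset.prod_congr rfl fun t _ => ?_
    push_cast
    ring
  have hne : (∏ t ∈ Finset.range (Vv + 1), ((m:ℚ) + (Uv + 1 + t))) ≠ 0 := by
    apply Finset.prod_ne_zero_iff.2
    intro t _
    positivity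
  have hfne : (((Uv + m) + Vv + 1).factorial : ℚ) ≠ 0 := by
    exact_mod_cast Nat.factorial_ne_zero _
  rw [div_eq_div_iff hfne hne]
  rw [show (Uv + m) + (Vv + 1) = (Uv + m) + Vv + 1 by ring] at hcast
  nlinarith [hcast]




lemma summable_one_div_add_pow {k : ℕ} (hk : 2 ≤ k) (j : ℕ) :
    Summable (fun m : ℕ => 1 / ((m : ℝ) + j) ^ k) := by
  have h : Summable (fun m : ℕ => 1 / ((m : ℝ)) ^ k) :=
    (Real.summable_one_div_nat_pow).2 (by omega)
  have := (summable_nat_add_iff (f := fun m : ℕ => 1 / ((m : ℝ)) ^ k) j).2 h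
  refine this.congr fun m => ?_
  push_cast; ring_nf

lemma hasSum_one_div_add_pow {k : ℕ} (hk : 2 ≤ k) (j : ℕ) (hj : 1 ≤ j) :
    HasSum (fun m : ℕ => 1 / ((m : ℝ) + j) ^ k)
      (zetaVal k - ∑ i ∈ Finset.range (j - 1), 1 / ((i : ℝ) + 1) ^ k) := by
  induction j with
  | zero => omega
  | succ j ih =>
    rcases Nat.eq_or_lt_of_le hj with h1 | h1
    · obtain rfl : j = 0 := by omega
      simpa [zetaVal] using (summable_one_div_add_pow hk 1).hasSum
    · have hj' : 1 ≤ j := by omega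
      have H := ih hj'
      set S := zetaVal k - ∑ i ∈ Finset.range (j - 1), 1 / ((i : ℝ) + 1) ^ k with hS
      have H2 : HasSum (fun m : ℕ => 1 / (((m + 1 : ℕ) : ℝ) + j) ^ k) (S - 1 / (j:ℝ)^k) := by
        refine (hasSum_nat_add_iff (f := fun m : ℕ => 1 / ((m : ℝ) + j) ^ k) 1).2 ?_
        convert H using 1
        · rfl
        · simp
      have heq : (fun m : ℕ => 1 / (((m + 1 : ℕ) : ℝ) + j) ^ k)
          = fun m : ℕ => 1 / ((m : ℝ) + ((j + 1 : ℕ) : ℝ)) ^ k := by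
        funext m; push_cast; ring_nf
      rw [heq] at H2
      convert H2 using 1
      have hje : j - 1 + 1 = j := by omega
      rw [show j + 1 - 1 = (j - 1) + 1 by omega, Finset.sum_range_succ]
      have hc : ((j - 1 : ℕ) : ℝ) + 1 = (j : ℝ) := by
        have h2 : ((j - 1 : ℕ) : ℝ) = (j : ℝ) - 1 := by
          push_cast [Nat.cast_sub hj']; ring
        rw [h2]; ring
      rw [hc, hS]
      ring

lemma hasSum_telescope_aux (j : ℕ) (hj : 1 ≤ j) :
    HasSum (fun m : ℕ => 1 / ((m : ℝ) + j) - 1 / ((m : ℝ) + j + 1)) (1 / (j : ℝ)) := by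
  have hnn : ∀ m : ℕ, 0 ≤ 1 / ((m : ℝ) + j) - 1 / ((m : ℝ) + j + 1) := by
    intro m
    have h1 : (0:ℝ) < (m : ℝ) + j := by positivity
    have h2 : (0:ℝ) < (m : ℝ) + j + 1 := by positivity
    rw [sub_nonneg]
    exact one_div_le_one_div_of_le h1 (by linarith)
  rw [hasSum_iff_tendsto_nat_of_nonneg hnn]
  have key : ∀ M : ℕ, ∑ m ∈ Finset.range M, (1 / ((m : ℝ) + j) - 1 / ((m : ℝ) + j + 1))
      = 1 / (j:ℝ) - 1 / ((M:ℝ) + j) := by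
    intro M
    induction M with
    | zero => simp
    | succ M ih =>
      rw [Finset.sum_range_succ, ih]
      push_cast
      ring
  simp_rw [key]
  have : Tendsto (fun M : ℕ => 1 / ((M:ℝ) + j)) atTop (𝓝 0) := by
    simp_rw [one_div]
    apply Tendsto.comp tendsto_inv_atTop_zero
    exact Tendsto.comp (tendsto_atTop_add_const_right _ _ tendsto_id) tendsto_natCast_atTop_atTop
  simpa using tendsto_const_nhds.sub this

lemma hasSum_one_div_sub (j : ℕ) (hj : 1 ≤ j) :
    HasSum (fun m : ℕ => 1 / ((m : ℝ) + 1) - 1 / ((m : ℝ) + j))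
      (∑ i ∈ Finset.range (j - 1), 1 / ((i : ℝ) + 1)) := by
  induction j with
  | zero => omega
  | succ j ih =>
    rcases Nat.eq_or_lt_of_le hj with h1 | h1
    · obtain rfl : j = 0 := by omega
      simpa using hasSum_zero
    · have hj' : 1 ≤ j := by omega
      have H := (ih hj').add (hasSum_telescope_aux j hj')
      have heq : (fun m : ℕ => (1 / ((m : ℝ) + 1) - 1 / ((m : ℝ) + j)) +
          (1 / ((m : ℝ) + j) - 1 / ((m : ℝ) + j + 1)))
          = fun m : ℕ => 1 / ((m : ℝ) + 1) - 1 / ((m : ℝ) + ((j+1 : ℕ) : ℝ)) := by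
        funext m; push_cast; ring
      rw [heq] at H
      convert H using 1
      rw [show j + 1 - 1 = (j - 1) + 1 by omega, Finset.sum_range_succ]
      have h2 : ((j - 1 : ℕ) : ℝ) = (j : ℝ) - 1 := by push_cast [Nat.cast_sub hj']; ring
      rw [h2]
      have : (j:ℝ) - 1 + 1 = (j:ℝ) := by ring
      rw [this]

noncomputable def rhoQ (j k : ℕ) : ℚ := ∑ i ∈ Finset.range j, 1 / ((i : ℚ) + 1) ^ k

lemma rhoQ_cast (j k : ℕ) : ((rhoQ j k : ℚ) : ℝ) = ∑ i ∈ Finset.range j, 1 / ((i : ℝ) + 1) ^ k := by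
  unfold rhoQ
  push_cast
  rfl

lemma sumPF (n : ℕ) (hn : 1 ≤ n) (J : Finset ℕ) (hJ : ∀ j ∈ J, 1 ≤ j) (c : ℕ → ℕ → ℚ)
    (f : ℕ → ℝ) (hf : Summable f)
    (hid : ∀ m : ℕ, f m = ∑ j ∈ J, ∑ k ∈ Finset.Icc 1 n, (c j k : ℝ) / ((m:ℝ) + j) ^ k) :
    ∃ a : ℕ → ℚ, ∑' m, f m = (a 0 : ℝ) + ∑ k ∈ Finset.Icc 2 n, (a k : ℝ) * zetaVal k := by
  classical
  -- split off k = 1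
  have hsplit : Finset.Icc 1 n = insert 1 (Finset.Icc 2 n) := by
    ext x; simp only [Finset.mem_Icc, Finset.mem_insert]; omega
  have h1notin : (1 : ℕ) ∉ Finset.Icc 2 n := by simp
  set g₂ : ℕ → ℝ := fun m => ∑ j ∈ J, ∑ k ∈ Finset.Icc 2 n, (c j k : ℝ) / ((m:ℝ) + j) ^ k
    with hg₂def
  set S₂ : ℝ := ∑ j ∈ J, ∑ k ∈ Finset.Icc 2 n,
      (c j k : ℝ) * (zetaVal k - ∑ i ∈ Finset.range (j - 1), 1 / ((i : ℝ) + 1) ^ k) with hS₂def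
  have hg₂ : HasSum g₂ S₂ := by
    refine hasSum_sum ?_
    intro j hj
    refine hasSum_sum ?_
    intro k hk
    have hk2 : 2 ≤ k := (Finset.mem_Icc.1 hk).1
    have := (hasSum_one_div_add_pow hk2 j (hJ j hj)).mul_left (c j k : ℝ)
    have heq : (fun i : ℕ => (c j k : ℝ) / ((i:ℝ)+j)^k)
        = fun i : ℕ => (c j k : ℝ) * (1 / ((i:ℝ)+j)^k) := funext fun i => by ring
    rw [heq]
    exact this
  set g₁ : ℕ → ℝ := fun m => ∑ j ∈ J, (c j 1 : ℝ) / ((m:ℝ) + j) with hg₁def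
  have hfg : ∀ m, f m = g₁ m + g₂ m := by
    intro m
    rw [hid m, hg₁def, hg₂def]
    simp only
    rw [← Finset.sum_add_distrib]
    refine Finset.sum_congr rfl fun j hj => ?_
    rw [hsplit, Finset.sum_insert h1notin, pow_one]
  set h : ℕ → ℝ := fun m => ∑ j ∈ J, (c j 1 : ℝ) * (1 / ((m:ℝ) + 1) - 1 / ((m:ℝ) + j))
    with hhdef
  set Sh : ℝ := ∑ j ∈ J, (c j 1 : ℝ) * (∑ i ∈ Finset.range (j - 1), 1 / ((i : ℝ) + 1))
    with hShdef
  have hh : HasSum h Sh := by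
    refine hasSum_sum ?_
    intro j hj
    exact (hasSum_one_div_sub j (hJ j hj)).mul_left _
  set s : ℝ := ∑ j ∈ J, (c j 1 : ℝ) with hsdef
  have hgh : ∀ m, g₁ m + h m = s * (1 / ((m:ℝ) + 1)) := by
    intro m
    rw [hg₁def, hhdef, hsdef, Finset.sum_mul, ← Finset.sum_add_distrib]
    refine Finset.sum_congr rfl fun j hj => ?_
    ring
  have hg₁sum : Summable g₁ := by
    have := hf.sub hg₂.summable
    exact this.congr (fun m => by rw [hfg m]; ring)
  have hssum : Summable (fun m : ℕ => s * (1 / ((m:ℝ) + 1))) := by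
    have := hg₁sum.add hh.summable
    exact this.congr (fun m => (hgh m))
  have hs0 : s = 0 := by
    by_contra hs
    have h2 : Summable (fun m : ℕ => 1 / ((m:ℝ) + 1)) := by
      have := hssum.mul_left s⁻¹
      refine this.congr fun m => ?_
      field_simp
    have h3 : Summable (fun m : ℕ => 1 / ((m:ℝ))) := by
      rw [← summable_nat_add_iff 1]
      exact h2.congr (fun m => by push_cast; ring_nf)
    exact Real.not_summable_one_div_natCast (by simpa [one_div] using h3)
  have hg₁ : HasSum g₁ (-Sh) := by
    refine hh.neg.congr_fun fun m => ?_
    have := hgh m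
    rw [hs0, zero_mul] at this
    linarith
  have hftotal : HasSum f (-Sh + S₂) := by
    refine (hg₁.add hg₂).congr_fun fun m => hfg m
  refine ⟨fun k => if k = 0 then
      (-∑ j ∈ J, c j 1 * rhoQ (j-1) 1 - ∑ j ∈ J, ∑ k ∈ Finset.Icc 2 n, c j k * rhoQ (j-1) k)
      else ∑ j ∈ J, c j k, ?_⟩
  rw [hftotal.tsum_eq]
  beta_reduce
  rw [if_pos rfl]
  have hA : (((-∑ j ∈ J, c j 1 * rhoQ (j-1) 1 - ∑ j ∈ J, ∑ k ∈ Finset.Icc 2 n,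
      c j k * rhoQ (j-1) k : ℚ)) : ℝ)
      = -Sh - ∑ j ∈ J, ∑ k ∈ Finset.Icc 2 n, (c j k : ℝ) *
        (∑ i ∈ Finset.range (j - 1), 1 / ((i : ℝ) + 1) ^ k) := by
    push_cast [rhoQ_cast]
    rw [hShdef]
    push_cast
    simp [pow_one]
  have hB : ∑ k ∈ Finset.Icc 2 n, ((if k = 0 then
      (-∑ j ∈ J, c j 1 * rhoQ (j-1) 1 - ∑ j ∈ J, ∑ k ∈ Finset.Icc 2 n, c j k * rhoQ (j-1) k)
      else ∑ j ∈ J, c j k : ℚ) : ℝ) * zetaVal k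
      = ∑ j ∈ J, ∑ k ∈ Finset.Icc 2 n, (c j k : ℝ) * zetaVal k := by
    have hstep : ∀ k ∈ Finset.Icc 2 n, ((if k = 0 then
        (-∑ j ∈ J, c j 1 * rhoQ (j-1) 1 - ∑ j ∈ J, ∑ k ∈ Finset.Icc 2 n, c j k * rhoQ (j-1) k)
        else ∑ j ∈ J, c j k : ℚ) : ℝ) * zetaVal k = ∑ j ∈ J, (c j k : ℝ) * zetaVal k := by
      intro k hk
      have hk0 : k ≠ 0 := by have := (Finset.mem_Icc.1 hk).1; omega
      rw [if_neg hk0]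
      push_cast
      rw [Finset.sum_mul]
    rw [Finset.sum_congr rfl hstep, Finset.sum_comm]
  rw [hA, hB, hS₂def]
  simp only [mul_sub, Finset.sum_sub_distrib]
  ring


lemma poly_eval_nat_tendsto_zero (Q : ℝ[X])
    (h : Tendsto (fun m : ℕ => Q.eval (m:ℝ)) atTop (𝓝 0)) : Q = 0 := by
  by_cases hdeg : 0 < Q.degree
  · exfalso
    have h1 := Polynomial.abs_tendsto_atTop Q hdeg
    have h2 : Tendsto (fun m : ℕ => |Q.eval (m:ℝ)|) atTop atTop :=
      h1.comp tendsto_natCast_atTop_atTop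
    exact not_tendsto_nhds_of_tendsto_atTop h2 0 (by simpa using h.abs)
  · have hC : Q = C (Q.coeff 0) := eq_C_of_degree_le_zero (not_lt.1 hdeg)
    have : Tendsto (fun _ : ℕ => Q.coeff 0) atTop (𝓝 0) := by
      convert h using 1
      funext m
      rw [hC]
      simp
    have h0 : Q.coeff 0 = 0 := tendsto_nhds_unique tendsto_const_nhds this
    rw [hC, h0, map_zero]


noncomputable def QP (D : Multiset ℕ) : ℚ[X] := (D.map (fun j : ℕ => X + C (j:ℚ))).prod

lemma QP_eval (D : Multiset ℕ) (x : ℚ) :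
    (QP D).eval x = (D.map (fun j : ℕ => x + (j:ℚ))).prod := by
  unfold QP
  rw [eval_multiset_prod, Multiset.map_map]
  congr 1
  apply Multiset.map_congr rfl
  intro j _
  simp

def DD (n : ℕ) (U V : Fin n → ℕ) : Multiset ℕ :=
  (Finset.univ.val : Multiset (Fin n)).bind (fun i => (Multiset.range (V i + 1)).map (fun t => U i + 1 + t))

lemma DD_mem_ge_one {n : ℕ} (U V : Fin n → ℕ) : ∀ j ∈ DD n U V, 1 ≤ j := by
  intro j hj
  rw [DD, Multiset.mem_bind] at hj
  obtain ⟨i, _, hj⟩ := hj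
  rw [Multiset.mem_map] at hj
  obtain ⟨t, _, rfl⟩ := hj
  omega

lemma DD_card {n : ℕ} (U V : Fin n → ℕ) : Multiset.card (DD n U V) = ∑ i, (V i + 1) := by
  rw [DD, Multiset.card_bind]
  simp [Finset.sum]

lemma DD_count_le {n : ℕ} (U V : Fin n → ℕ) (j : ℕ) : (DD n U V).count j ≤ n := by
  rw [DD, Multiset.count_bind]
  have hle : ∀ i : Fin n,
      ((Multiset.range (V i + 1)).map (fun t => U i + 1 + t)).count j ≤ 1 := by
    intro i
    have hnd : ((Multiset.range (V i + 1)).map (fun t => U i + 1 + t)).Nodup := by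
      refine Multiset.Nodup.map ?_ (Multiset.nodup_range _)
      intro a b hab
      simp only at hab
      omega
    exact Multiset.nodup_iff_count_le_one.1 hnd j
  calc ((Finset.univ.val : Multiset (Fin n)).map
        (fun i => ((Multiset.range (V i + 1)).map (fun t => U i + 1 + t)).count j)).sum
      ≤ ((Finset.univ.val : Multiset (Fin n)).map (fun _ => 1)).sum :=
        Multiset.sum_map_le_sum_map _ _ (fun i _ => hle i)
    _ = n := by simp

lemma QP_DD_eval {n : ℕ} (U V : Fin n → ℕ) (m : ℕ) :
    (QP (DD n U V)).eval (m:ℚ) = ∏ i, ∏ t ∈ Finset.range (V i + 1), ((m:ℚ) + (U i + 1 + t)) := by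
  rw [QP_eval, DD, Multiset.map_bind, Multiset.prod_bind]
  rw [Finset.prod_eq_multiset_prod]
  congr 1
  apply Multiset.map_congr rfl
  intro i _
  rw [Multiset.map_map]
  rw [Finset.prod_eq_multiset_prod, Finset.range_val]
  congr 1
  apply Multiset.map_congr rfl
  intro t _
  simp only [Function.comp_apply]
  push_cast
  ring

lemma QP_add (s t : Multiset ℕ) : QP (s + t) = QP s * QP t := by
  unfold QP; rw [Multiset.map_add, Multiset.prod_add]

lemma QP_replicate (e j : ℕ) : QP (Multiset.replicate e j) = (X + C (j:ℚ)) ^ e := by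
  unfold QP; rw [Multiset.map_replicate, Multiset.prod_replicate]

lemma QP_eval_pos (D : Multiset ℕ) (hD : ∀ j ∈ D, 1 ≤ j) (m : ℕ) :
    0 < (QP D).eval (m:ℚ) := by
  rw [QP_eval]
  apply Multiset.prod_pos
  intro y hy
  obtain ⟨j, hj, rfl⟩ := Multiset.mem_map.1 hy
  have := hD j hj
  positivity

lemma partialFrac (D : Multiset ℕ) (hD : ∀ j ∈ D, 1 ≤ j) (P : ℚ[X]) :
    ∃ (P₀ : ℚ[X]) (c : ℕ → ℕ → ℚ),
      (∀ j k, c j k ≠ 0 → 1 ≤ k ∧ k ≤ D.count j) ∧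
      ∀ (J : Finset ℕ) (K : ℕ), D.toFinset ⊆ J → (∀ j, D.count j ≤ K) →
        ∀ m : ℕ, P.eval (m:ℚ) / (QP D).eval (m:ℚ)
          = P₀.eval (m:ℚ) + ∑ j ∈ J, ∑ k ∈ Finset.Icc 1 K, c j k / ((m:ℚ)+j)^k := by
  classical
  induction D using Multiset.strongInductionOn generalizing P with
  | ih D IH =>
  rcases Multiset.empty_or_exists_mem D with rfl | ⟨j₀, hj₀⟩
  · refine ⟨P, 0, by simp, ?_⟩
    intro J K _ _ m
    simp [QP]
  · set e := D.count j₀ with he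
    have he1 : 1 ≤ e := by rwa [he, Nat.one_le_iff_ne_zero, Ne, Multiset.count_eq_zero, not_not]
    set D' : Multiset ℕ := D.filter (fun j => ¬ j = j₀) with hD'
    have hDdecomp : Multiset.replicate e j₀ + D' = D := by
      rw [hD', he, ← Multiset.filter_eq']
      exact Multiset.filter_add_not _ _
    have hDe : D.erase j₀ = Multiset.replicate (e-1) j₀ + D' := by
      ext a
      by_cases ha : a = j₀
      · subst ha
        rw [Multiset.count_erase_self, Multiset.count_add, Multiset.count_replicate_self,
          hD', Multiset.count_filter]
        simp [← he]
      · rw [Multiset.count_erase_of_ne ha, Multiset.count_add, Multiset.count_replicate,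
          if_neg (fun h => ha h.symm), hD', Multiset.count_filter, if_pos ha]
        simp
    have hD'mem : ∀ j ∈ D', 1 ≤ j := fun j hj => hD j (Multiset.mem_of_mem_filter hj)
    have hDemem : ∀ j ∈ D.erase j₀, 1 ≤ j := fun j hj => hD j (Multiset.mem_of_mem_erase hj)
    set q1 : ℚ := (QP D').eval (-(j₀:ℚ)) with hq1
    have hq1ne : q1 ≠ 0 := by
      rw [hq1, QP_eval]
      apply Multiset.prod_ne_zero
      intro h0
      obtain ⟨j, hj, hj0⟩ := Multiset.mem_map.1 h0
      have hne : j ≠ j₀ := by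
        have := Multiset.of_mem_filter hj; simpa using this
      apply hne
      have : (j:ℚ) = (j₀:ℚ) := by linarith [hj0]
      exact_mod_cast this
    set cc : ℚ := P.eval (-(j₀:ℚ)) / q1 with hcc
    have hroot : IsRoot (P - C cc * QP D') (-(j₀:ℚ)) := by
      simp only [IsRoot, eval_sub, eval_mul, eval_C]
      rw [hcc]
      field_simp
      rw [← hq1]; ring
    obtain ⟨P₁, hP₁⟩ := (dvd_iff_isRoot.2 hroot)
    have hXC : X - C (-(j₀:ℚ)) = X + C (j₀:ℚ) := by rw [map_neg, sub_neg_eq_add]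
    rw [hXC] at hP₁
    obtain ⟨P₀, c', hsup', hid'⟩ := IH (D.erase j₀) (Multiset.erase_lt.2 hj₀) hDemem P₁
    refine ⟨P₀, fun j k => (if j = j₀ ∧ k = e then cc else 0) + c' j k, ?_, ?_⟩
    · intro j k hne
      have hne' : (if j = j₀ ∧ k = e then cc else 0) + c' j k ≠ 0 := hne
      by_cases hif : j = j₀ ∧ k = e
      · obtain ⟨rfl, rfl⟩ := hif
        exact ⟨he1, le_refl _⟩
      · rw [if_neg hif, zero_add] at hne'
        obtain ⟨h1, h2⟩ := hsup' j k hne'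
        exact ⟨h1, h2.trans (Multiset.count_le_of_le _ (Multiset.erase_le _ _))⟩
    · intro J K hJ hK m
      have hj₀J : j₀ ∈ J := hJ (Multiset.mem_toFinset.2 hj₀)
      have heK : e ∈ Finset.Icc 1 K := Finset.mem_Icc.2 ⟨he1, (he ▸ hK j₀)⟩
      have hJe : (D.erase j₀).toFinset ⊆ J := by
        refine subset_trans ?_ hJ
        intro a ha
        exact Multiset.mem_toFinset.2 (Multiset.mem_of_mem_erase (Multiset.mem_toFinset.1 ha))
      have hKe : ∀ j, (D.erase j₀).count j ≤ K :=
        fun j => le_trans (Multiset.count_le_of_le _ (Multiset.erase_le _ _)) (hK j)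
      have IHid := hid' J K hJe hKe m
      -- evaluations
      have hpos1 : (0:ℚ) < (m:ℚ) + j₀ := by
        have := hD j₀ hj₀; positivity
      have hposD' : (0:ℚ) < (QP D').eval (m:ℚ) := QP_eval_pos D' hD'mem m
      have hQD : (QP D).eval (m:ℚ) = ((m:ℚ) + j₀)^e * (QP D').eval (m:ℚ) := by
        rw [← hDdecomp, QP_add, QP_replicate, eval_mul, eval_pow, eval_add, eval_X, eval_C]
      have hQE : (QP (D.erase j₀)).eval (m:ℚ)
          = ((m:ℚ) + j₀)^(e-1) * (QP D').eval (m:ℚ) := by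
        rw [hDe, QP_add, QP_replicate, eval_mul, eval_pow, eval_add, eval_X, eval_C]
      have hPm : P.eval (m:ℚ) = cc * (QP D').eval (m:ℚ) + ((m:ℚ) + j₀) * P₁.eval (m:ℚ) := by
        have := congrArg (eval (m:ℚ)) hP₁
        simp only [eval_sub, eval_mul, eval_C, eval_add, eval_X] at this
        linarith
      have key : P.eval (m:ℚ) / (QP D).eval (m:ℚ)
          = cc / ((m:ℚ) + j₀)^e + P₁.eval (m:ℚ) / (QP (D.erase j₀)).eval (m:ℚ) := by
        have hA : ((m:ℚ)+j₀)^e = ((m:ℚ)+j₀)^(e-1) * ((m:ℚ)+j₀) := by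
          rw [← pow_succ]
          congr 1
          omega
        rw [hQD, hQE, hPm, add_div]
        congr 1
        · rw [mul_div_mul_right _ _ (ne_of_gt hposD')]
        · rw [hA]
          have hrearr : ((m:ℚ)+j₀)^(e-1) * (((m:ℚ)+j₀)) * (QP D').eval (m:ℚ)
              = ((m:ℚ)+j₀) * (((m:ℚ)+j₀)^(e-1) * (QP D').eval (m:ℚ)) := by ring
          rw [hrearr, mul_div_mul_left _ _ (ne_of_gt hpos1)]
      rw [key, IHid]
      -- delta sum
      have hdelta : ∑ j ∈ J, ∑ k ∈ Finset.Icc 1 K,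
          (if j = j₀ ∧ k = e then cc else 0) / ((m:ℚ)+j)^k = cc / ((m:ℚ)+j₀)^e := by
        rw [Finset.sum_eq_single_of_mem j₀ hj₀J]
        · rw [Finset.sum_eq_single_of_mem e heK]
          · simp
          · intro k _ hk
            rw [if_neg (by tauto), zero_div]
        · intro j _ hj
          apply Finset.sum_eq_zero
          intro k _
          rw [if_neg (by tauto), zero_div]
      have hsplitsum : ∑ j ∈ J, ∑ k ∈ Finset.Icc 1 K,
          ((if j = j₀ ∧ k = e then cc else 0) + c' j k) / ((m:ℚ)+j)^k
          = (∑ j ∈ J, ∑ k ∈ Finset.Icc 1 K,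
              (if j = j₀ ∧ k = e then cc else 0) / ((m:ℚ)+j)^k)
            + ∑ j ∈ J, ∑ k ∈ Finset.Icc 1 K, c' j k / ((m:ℚ)+j)^k := by
        rw [← Finset.sum_add_distrib]
        refine Finset.sum_congr rfl fun j _ => ?_
        rw [← Finset.sum_add_distrib]
        refine Finset.sum_congr rfl fun k _ => ?_
        rw [add_div]
      rw [hsplitsum, hdelta]
      ring



lemma beta_nat (a b : ℕ) : ∫ x in (0:ℝ)..1, x ^ a * (1 - x) ^ b
    = (a.factorial * b.factorial : ℝ) / (a + b + 1).factorial := by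
  induction b generalizing a with
  | zero =>
    simp only [pow_zero, mul_one, integral_pow, Nat.factorial_zero, Nat.cast_one,
      Nat.add_zero]
    rw [show a + 0 + 1 = a + 1 by ring]
    rw [Nat.factorial_succ]
    push_cast
    field_simp
    simp
  | succ b ih =>
    have hu : ∀ x ∈ Set.uIcc (0:ℝ) 1, HasDerivAt (fun y : ℝ => (1 - y) ^ (b+1))
        (-(b+1) * (1 - x) ^ b) x := by
      intro x _
      have h1 : HasDerivAt (fun y : ℝ => 1 - y) (-1) x := by
        simpa using (hasDerivAt_id x).const_sub 1
      have := h1.fun_pow (b+1)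
      refine this.congr_deriv ?_
      push_cast
      ring
    have hv : ∀ x ∈ Set.uIcc (0:ℝ) 1, HasDerivAt (fun y : ℝ => y ^ (a+1) / (a+1))
        (x ^ a) x := by
      intro x _
      have := (hasDerivAt_pow (a+1) x).div_const ((a:ℝ)+1)
      refine this.congr_deriv ?_
      have : ((a:ℝ) + 1) ≠ 0 := by positivity
      push_cast
      field_simp
    have hu' : IntervalIntegrable (fun x : ℝ => -((b:ℝ)+1) * (1 - x) ^ b) volume 0 1 := by
      apply Continuous.intervalIntegrable
      continuity
    have hv' : IntervalIntegrable (fun x : ℝ => x ^ a) volume 0 1 := by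
      apply Continuous.intervalIntegrable
      continuity
    have hparts := intervalIntegral.integral_mul_deriv_eq_deriv_mul hu hv hu' hv'
    -- hparts : ∫ (1-x)^(b+1) * x^a = ... - ∫ (-(b+1) (1-x)^b * (x^(a+1)/(a+1)))
    have hL : ∫ x in (0:ℝ)..1, x ^ a * (1 - x) ^ (b+1)
        = ∫ x in (0:ℝ)..1, (1 - x) ^ (b+1) * x ^ a := by
      congr 1
      funext x
      ring
    rw [hL, hparts]
    have hR : ∫ x in (0:ℝ)..1, -((b:ℝ)+1) * (1 - x) ^ b * (x ^ (a+1) / ((a:ℝ)+1))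
        = (-((b:ℝ)+1) / ((a:ℝ)+1)) * ∫ x in (0:ℝ)..1, x ^ (a+1) * (1 - x) ^ b := by
      rw [← intervalIntegral.integral_const_mul]
      congr 1
      funext x
      field_simp
    rw [hR, ih (a+1)]
    simp only [one_pow, pow_succ]
    rw [show a + 1 + b + 1 = a + (b+1) + 1 by ring]
    have h1 : ((a + (b+1) + 1).factorial : ℝ) ≠ 0 := by
      exact_mod_cast Nat.factorial_ne_zero _
    have h2 : ((a:ℝ) + 1) ≠ 0 := by positivity
    rw [Nat.factorial_succ (a), Nat.factorial_succ b]
    push_cast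
    field_simp
    ring

lemma key_sum (n : ℕ) (hn : 1 ≤ n) (U V : Fin n → ℕ) (N : ℕ) (hN : 1 ≤ N)
    (hsum : N + 1 ≤ ∑ i, (V i + 1)) :
    Summable (fun m : ℕ => ((m + (N-1)).choose (N-1) : ℝ) *
      ∏ i, ((U i + m).factorial * (V i).factorial : ℝ) / ((U i + m) + V i + 1).factorial) ∧
    ∃ a : ℕ → ℚ, (∑' m : ℕ, ((m + (N-1)).choose (N-1) : ℝ) *
      ∏ i, ((U i + m).factorial * (V i).factorial : ℝ) / ((U i + m) + V i + 1).factorial)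
      = (a 0 : ℝ) + ∑ k ∈ Finset.Icc 2 n, (a k : ℝ) * zetaVal k := by
  classical
  set r : ℕ → ℝ := fun m => ((m + (N-1)).choose (N-1) : ℝ) *
      ∏ i, ((U i + m).factorial * (V i).factorial : ℝ) / ((U i + m) + V i + 1).factorial
    with hrdef
  set A : ℚ := (∏ i, ((V i).factorial : ℚ)) / ((N-1).factorial : ℚ) with hA
  have hApos : 0 < A := by
    rw [hA]
    apply div_pos
    · apply Finset.prod_pos
      intro i _
      exact_mod_cast Nat.factorial_pos _
    · exact_mod_cast Nat.factorial_pos _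
  set P : ℚ[X] := C A * ∏ s ∈ Finset.range (N-1), (X + C ((s:ℚ)+1)) with hP
  set D : Multiset ℕ := DD n U V with hD
  have hPeval : ∀ m : ℕ, P.eval (m:ℚ) = A * ∏ s ∈ Finset.range (N-1), ((m:ℚ)+1+s) := by
    intro m
    rw [hP, eval_mul, eval_C, eval_prod]
    congr 1
    refine Finset.prod_congr rfl fun s _ => ?_
    rw [eval_add, eval_X, eval_C]
    ring
  have hdenpos : ∀ m : ℕ, (0:ℚ) < ∏ i, ∏ t ∈ Finset.range (V i + 1), ((m:ℚ) + (U i + 1 + t)) := by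
    intro m
    apply Finset.prod_pos
    intro i _
    apply Finset.prod_pos
    intro t _
    positivity
  have hrho : ∀ m : ℕ, r m = ((P.eval (m:ℚ) / (QP D).eval (m:ℚ) : ℚ) : ℝ) := by
    intro m
    have hq : ((m + (N-1)).choose (N-1) : ℚ) *
        ∏ i, ((U i + m).factorial * (V i).factorial : ℚ) / ((U i + m) + V i + 1).factorial
        = P.eval (m:ℚ) / (QP D).eval (m:ℚ) := by
      rw [hPeval, hD, QP_DD_eval, choose_cast_eq]
      have hbeta : ∀ i : Fin n, ((U i + m).factorial * (V i).factorial : ℚ) /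
          ((U i + m) + V i + 1).factorial
          = ((V i).factorial : ℚ) / ∏ t ∈ Finset.range (V i + 1), ((m:ℚ) + (U i + 1 + t)) := by
        intro i
        have := beta_frac_eq (U i) (V i) m
        push_cast at this ⊢
        convert this using 3
      rw [Finset.prod_congr rfl (fun i _ => hbeta i), Finset.prod_div_distrib]
      rw [hA]
      have h1 : ((N-1).factorial : ℚ) ≠ 0 := by exact_mod_cast Nat.factorial_ne_zero _
      have h2 : (∏ i, ∏ t ∈ Finset.range (V i + 1), ((m:ℚ) + (U i + 1 + t))) ≠ 0 :=
        ne_of_gt (hdenpos m)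
      have h3 : (∏ i, (((V i).factorial : ℚ))) ≠ 0 := by
        apply Finset.prod_ne_zero_iff.2
        intro i _
        exact_mod_cast Nat.factorial_ne_zero _
      field_simp
    rw [hrdef]
    simp only
    rw [← hq]
    push_cast
    ring
  have hreal : ∀ m : ℕ, r m = (A:ℝ) * (∏ s ∈ Finset.range (N-1), ((m:ℝ)+1+s))
      / (∏ i, ∏ t ∈ Finset.range (V i + 1), ((m:ℝ) + (U i + 1 + t))) := by
    intro m
    rw [hrho m, hPeval, hD, QP_DD_eval]
    push_cast
    ring
  have hdenposR : ∀ m : ℕ, (0:ℝ) < ∏ i, ∏ t ∈ Finset.range (V i + 1), ((m:ℝ) + (U i + 1 + t)) := by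
    intro m
    apply Finset.prod_pos
    intro i _
    apply Finset.prod_pos
    intro t _
    positivity
  set C : ℝ := (A:ℝ) * ∏ s ∈ Finset.range (N-1), ((s:ℝ)+1) with hC
  have hCpos : 0 < C := by
    rw [hC]
    apply mul_pos
    · exact_mod_cast hApos
    · apply Finset.prod_pos
      intro s _
      positivity
  have hrnn : ∀ m, 0 ≤ r m := by
    intro m
    rw [hreal]
    have := hdenposR m
    have hApos' : (0:ℝ) < (A:ℝ) := by exact_mod_cast hApos
    have : (0:ℝ) ≤ ∏ s ∈ Finset.range (N-1), ((m:ℝ)+1+s) := by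
      apply Finset.prod_nonneg
      intro s _
      positivity
    positivity
  have hbound : ∀ m : ℕ, r m ≤ C * (1 / ((m:ℝ)+1)^2) := by
    intro m
    have hm1 : (0:ℝ) < (m:ℝ) + 1 := by positivity
    have hnum : ∏ s ∈ Finset.range (N-1), ((m:ℝ)+1+s)
        ≤ (∏ s ∈ Finset.range (N-1), ((s:ℝ)+1)) * ((m:ℝ)+1)^(N-1) := by
      calc ∏ s ∈ Finset.range (N-1), ((m:ℝ)+1+s)
          ≤ ∏ s ∈ Finset.range (N-1), (((s:ℝ)+1) * ((m:ℝ)+1)) := by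
            apply Finset.prod_le_prod
            · intro s _; positivity
            · intro s _
              have hs : (0:ℝ) ≤ (s:ℝ) := Nat.cast_nonneg s
              have hm : (0:ℝ) ≤ (m:ℝ) := Nat.cast_nonneg m
              nlinarith
        _ = (∏ s ∈ Finset.range (N-1), ((s:ℝ)+1)) * ((m:ℝ)+1)^(N-1) := by
            rw [Finset.prod_mul_distrib, Finset.prod_const, Finset.card_range]
    have hden : ((m:ℝ)+1)^(∑ i, (V i + 1))
        ≤ ∏ i, ∏ t ∈ Finset.range (V i + 1), ((m:ℝ) + (U i + 1 + t)) := by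
      rw [← Finset.prod_pow_eq_pow_sum]
      apply Finset.prod_le_prod
      · intro i _; positivity
      · intro i _
        calc ((m:ℝ)+1)^(V i + 1) = ∏ t ∈ Finset.range (V i + 1), ((m:ℝ)+1) := by
              rw [Finset.prod_const, Finset.card_range]
          _ ≤ ∏ t ∈ Finset.range (V i + 1), ((m:ℝ) + (U i + 1 + t)) := by
              apply Finset.prod_le_prod
              · intro t _; positivity
              · intro t _
                have : (0:ℝ) ≤ (U i : ℝ) := Nat.cast_nonneg _
                have ht : (0:ℝ) ≤ (t:ℝ) := Nat.cast_nonneg _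
                linarith
    have hApos' : (0:ℝ) < (A:ℝ) := by exact_mod_cast hApos
    have step1 : r m ≤ (C * ((m:ℝ)+1)^(N-1)) / (((m:ℝ)+1)^(∑ i, (V i + 1))) := by
      rw [hreal]
      apply div_le_div₀ (by positivity) ?_ (by positivity) hden
      rw [hC, mul_assoc]
      exact mul_le_mul_of_nonneg_left hnum (le_of_lt hApos')
    refine le_trans step1 ?_
    have hkey : C * ((m:ℝ)+1)^(N-1) * ((m:ℝ)+1)^2 ≤ C * ((m:ℝ)+1)^(∑ i, (V i + 1)) := by
      rw [mul_assoc, ← pow_add]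
      exact mul_le_mul_of_nonneg_left (pow_le_pow_right₀ (by linarith) (by omega)) hCpos.le
    rw [div_le_iff₀ (by positivity)]
    have h2 : C * (1/((m:ℝ)+1)^2) * ((m:ℝ)+1)^(∑ i, (V i + 1))
        = C * ((m:ℝ)+1)^(∑ i, (V i + 1)) / ((m:ℝ)+1)^2 := by ring
    rw [h2, le_div_iff₀ (by positivity)]
    nlinarith [hkey]
  have hsummable : Summable r := by
    apply Summable.of_nonneg_of_le hrnn hbound
    apply Summable.mul_left
    have := summable_one_div_add_pow (k := 2) le_rfl 1
    refine this.congr fun m => ?_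
    norm_num
  obtain ⟨P₀, c, hsup, hid⟩ := partialFrac D (hD ▸ DD_mem_ge_one U V) P
  have hcount := fun j => hD ▸ DD_count_le U V j
  have hidm := hid D.toFinset n subset_rfl hcount
  -- cast identity to ℝ
  set P₀R : ℝ[X] := P₀.map (Rat.castHom ℝ) with hP₀R
  have hcastP₀ : ∀ m : ℕ, ((P₀.eval (m:ℚ) : ℚ) : ℝ) = P₀R.eval (m:ℝ) := by
    intro m
    rw [hP₀R, eval_map]
    have : ((m:ℝ)) = (Rat.castHom ℝ) ((m:ℚ)) := by simp
    rw [this, eval₂_at_apply]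
    simp
  have hidR : ∀ m : ℕ, r m = P₀R.eval (m:ℝ)
      + ∑ j ∈ D.toFinset, ∑ k ∈ Finset.Icc 1 n, (c j k : ℝ) / ((m:ℝ)+j)^k := by
    intro m
    rw [hrho m, hidm m]
    push_cast [hcastP₀]
    rfl
  have hterms : Tendsto (fun m : ℕ => ∑ j ∈ D.toFinset, ∑ k ∈ Finset.Icc 1 n,
      (c j k : ℝ) / ((m:ℝ)+j)^k) atTop (𝓝 0) := by
    have : (0:ℝ) = ∑ j ∈ D.toFinset, ∑ k ∈ Finset.Icc 1 n, (0:ℝ) := by simp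
    rw [this]
    apply tendsto_finset_sum
    intro j hj
    apply tendsto_finset_sum
    intro k hk
    have hk1 : 1 ≤ k := (Finset.mem_Icc.1 hk).1
    have hj1 : 1 ≤ j := DD_mem_ge_one U V j (hD ▸ Multiset.mem_toFinset.1 hj)
    apply Tendsto.div_atTop tendsto_const_nhds
    apply Tendsto.comp (tendsto_pow_atTop (by omega))
    apply Filter.tendsto_atTop_add_const_right
    exact tendsto_natCast_atTop_atTop
  have hP₀R0 : P₀R = 0 := by
    apply poly_eval_nat_tendsto_zero
    have h1 : Tendsto r atTop (𝓝 0) := hsummable.tendsto_atTop_zero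
    have h2 : ∀ m : ℕ, P₀R.eval (m:ℝ) = r m - ∑ j ∈ D.toFinset, ∑ k ∈ Finset.Icc 1 n,
        (c j k : ℝ) / ((m:ℝ)+j)^k := by
      intro m
      rw [hidR m]
      ring
    simp_rw [h2]
    simpa using h1.sub hterms
  have hidR' : ∀ m : ℕ, r m = ∑ j ∈ D.toFinset, ∑ k ∈ Finset.Icc 1 n,
      (c j k : ℝ) / ((m:ℝ)+j)^k := by
    intro m
    rw [hidR m, hP₀R0]
    simp
  refine ⟨hsummable, ?_⟩
  exact sumPF n hn D.toFinset
    (fun j hj => DD_mem_ge_one U V j (hD ▸ Multiset.mem_toFinset.1 hj)) c r hsummable hidR'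


lemma unitCube_measurable (n : ℕ) : MeasurableSet (unitCube n) :=
  MeasurableSet.univ_pi fun _ => measurableSet_Ioo

def indF (p q : ℕ) : ℝ → ℝ := Set.indicator (Set.Ioo (0:ℝ) 1) (fun t => t ^ p * (1 - t) ^ q)

lemma indF_nonneg (p q : ℕ) (t : ℝ) : 0 ≤ indF p q t := by
  apply Set.indicator_nonneg
  intro s hs
  obtain ⟨h1, h2⟩ := hs
  have h3 : (0:ℝ) ≤ 1 - s := by linarith
  positivity

lemma indF_measurable (p q : ℕ) : Measurable (indF p q) := by
  apply Measurable.indicator ?_ measurableSet_Ioo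
  exact ((measurable_id.pow_const p).mul ((measurable_const.sub measurable_id).pow_const q))

lemma indF_integrable (p q : ℕ) : Integrable (indF p q) := by
  rw [indF, integrable_indicator_iff measurableSet_Ioo]
  exact (((continuous_pow p).mul ((continuous_const.sub continuous_id).pow q)).continuousOn.integrableOn_compact
    isCompact_Icc).mono_set Set.Ioo_subset_Icc_self

lemma indF_integral (p q : ℕ) :
    ∫ t, indF p q t = (p.factorial * q.factorial : ℝ) / (p + q + 1).factorial := by
  rw [indF, MeasureTheory.integral_indicator measurableSet_Ioo, ← integral_Ioc_eq_integral_Ioo,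
    ← intervalIntegral.integral_of_le zero_le_one]
  exact beta_nat p q

lemma prod_indF_integrable (n : ℕ) (p q : Fin n → ℕ) :
    Integrable (fun x : Fin n → ℝ => ∏ i, indF (p i) (q i) (x i)) :=
  Integrable.fintype_prod (𝕜 := ℝ) (fun i => indF_integrable (p i) (q i))

lemma prod_indF_integral (n : ℕ) (p q : Fin n → ℕ) :
    ∫ x : Fin n → ℝ, ∏ i, indF (p i) (q i) (x i)
      = ∏ i, ((p i).factorial * (q i).factorial : ℝ) / (p i + q i + 1).factorial := by
  rw [MeasureTheory.volume_pi, MeasureTheory.integral_fintype_prod_eq_prod (𝕜 := ℝ) (fun i => indF (p i) (q i))]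
  exact Finset.prod_congr rfl fun i _ => indF_integral (p i) (q i)

lemma mem_unitCube {n : ℕ} (x : Fin n → ℝ) :
    x ∈ unitCube n ↔ ∀ i, x i ∈ Set.Ioo (0:ℝ) 1 := by
  simp [unitCube, Set.mem_pi]

end

theorem stmt9 (n : ℕ) (hn : 1 ≤ n) (u v : Fin n → ℕ)
    (hu : ∀ i, 1 ≤ u i) (hv : ∀ i, 1 ≤ v i)
    (N : ℕ) (hsum : N + 1 ≤ ∑ i, v i) :
    IntegrableOn (fun x : Fin n → ℝ =>
        (∏ i, x i ^ (u i - 1) * (1 - x i) ^ (v i - 1)) / (1 - ∏ i, x i) ^ N)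
      (unitCube n) ∧
    ∃ a : ℕ → ℚ,
      (∫ x in unitCube n,
          (∏ i, x i ^ (u i - 1) * (1 - x i) ^ (v i - 1)) / (1 - ∏ i, x i) ^ N)
        = (a 0 : ℝ) + ∑ k ∈ Finset.Icc 2 n, (a k : ℝ) * zetaVal k := by
  classical
  set F : (Fin n → ℝ) → ℝ := fun x =>
      (∏ i, x i ^ (u i - 1) * (1 - x i) ^ (v i - 1)) / (1 - ∏ i, x i) ^ N with hF
  have hcube := unitCube_measurable n
  have hFmeas : Measurable F := by
    apply Measurable.div
    · apply Finset.measurable_prod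
      intro i _
      exact ((measurable_pi_apply i).pow_const _).mul
        ((measurable_const.sub (measurable_pi_apply i)).pow_const _)
    · apply Measurable.pow_const
      apply Measurable.sub measurable_const
      apply Finset.measurable_prod
      intro i _
      exact measurable_pi_apply i
  by_cases hN0 : N = 0
  · -- trivial case N = 0
    subst hN0
    have hFeq : Set.indicator (unitCube n) F
        = fun x => ∏ i, indF (u i - 1) (v i - 1) (x i) := by
      funext x
      by_cases hx : x ∈ unitCube n
      · rw [Set.indicator_of_mem hx, hF]
        have hxi := (mem_unitCube x).1 hx
        simp only [pow_zero, div_one]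
        refine Finset.prod_congr rfl fun i _ => ?_
        rw [indF, Set.indicator_of_mem (hxi i)]
      · rw [Set.indicator_of_notMem hx]
        obtain ⟨i0, hi0⟩ : ∃ i, x i ∉ Set.Ioo (0:ℝ) 1 := by
          by_contra hall
          push_neg at hall
          exact hx ((mem_unitCube x).2 hall)
        rw [eq_comm]
        apply Finset.prod_eq_zero (Finset.mem_univ i0)
        rw [indF, Set.indicator_of_notMem hi0]
    have hint : Integrable (Set.indicator (unitCube n) F) := by
      rw [hFeq]
      exact prod_indF_integrable n _ _
    refine ⟨(integrable_indicator_iff hcube).1 hint, ?_⟩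
    refine ⟨fun k => if k = 0 then
      (∏ i, ((u i - 1).factorial * (v i - 1).factorial : ℚ)
        / ((u i - 1) + (v i - 1) + 1).factorial) else 0, ?_⟩
    have : ∫ x in unitCube n, F x
        = ∏ i, ((u i - 1).factorial * (v i - 1).factorial : ℝ)
          / ((u i - 1) + (v i - 1) + 1).factorial := by
      rw [← MeasureTheory.integral_indicator hcube]
      rw [hFeq]
      exact prod_indF_integral n _ _
    rw [this]
    beta_reduce
    rw [Finset.sum_eq_zero (fun k hk => by
      have hk0 : k ≠ 0 := by have := (Finset.mem_Icc.1 hk).1; omega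
      rw [if_neg hk0]
      simp), if_pos rfl]
    push_cast
    ring
  · -- main case N ≥ 1
    have hN1 : 1 ≤ N := by omega
    set U : Fin n → ℕ := fun i => u i - 1 with hU
    set V : Fin n → ℕ := fun i => v i - 1 with hV
    have hsum' : N + 1 ≤ ∑ i, (V i + 1) := by
      have : ∑ i, (V i + 1) = ∑ i, v i := by
        refine Finset.sum_congr rfl fun i _ => ?_
        have := hv i
        simp only [hV]
        omega
      omega
    obtain ⟨hrsummable, a, ha⟩ := key_sum n hn U V N hN1 hsum'
    set r : ℕ → ℝ := fun m => ((m + (N-1)).choose (N-1) : ℝ) *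
        ∏ i, ((U i + m).factorial * (V i).factorial : ℝ) / ((U i + m) + V i + 1).factorial
      with hr
    set fm : ℕ → (Fin n → ℝ) → ℝ := fun m x => ((m + (N-1)).choose (N-1) : ℝ) *
        ∏ i, indF (U i + m) (V i) (x i) with hfm
    have hfm_int : ∀ m, Integrable (fm m) :=
      fun m => (prod_indF_integrable n (fun i => U i + m) V).const_mul _
    have hfm_val : ∀ m, ∫ x, fm m x = r m := by
      intro m
      rw [hfm]
      simp only
      rw [MeasureTheory.integral_const_mul, prod_indF_integral n (fun i => U i + m) V]
    have hfm_nn : ∀ m x, 0 ≤ fm m x := by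
      intro m x
      apply mul_nonneg (Nat.cast_nonneg _)
      exact Finset.prod_nonneg fun i _ => indF_nonneg _ _ _
    have hfm_meas : ∀ m, Measurable (fm m) := by
      intro m
      apply Measurable.const_mul
      apply Finset.measurable_prod
      intro i _
      exact (indF_measurable _ _).comp (measurable_pi_apply i)
    have hrnn : ∀ m, 0 ≤ r m := by
      intro m
      apply mul_nonneg (Nat.cast_nonneg _)
      refine Finset.prod_nonneg fun i _ => ?_
      apply div_nonneg
      · exact mul_nonneg (Nat.cast_nonneg _) (Nat.cast_nonneg _)
      · exact Nat.cast_nonneg _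
    have hHasSum : ∀ x, HasSum (fun m => fm m x) (Set.indicator (unitCube n) F x) := by
      intro x
      by_cases hx : x ∈ unitCube n
      · have hxi := (mem_unitCube x).1 hx
        rw [Set.indicator_of_mem hx]
        have ht0 : 0 < ∏ i, x i := Finset.prod_pos fun i _ => (hxi i).1
        have ht1 : ∏ i, x i < 1 := by
          have hne : (Finset.univ : Finset (Fin n)).Nonempty := by
            refine ⟨⟨0, by omega⟩, Finset.mem_univ _⟩
          have := Finset.prod_lt_prod_of_nonempty
            (f := fun i => x i) (g := fun _ => (1:ℝ)) (fun i _ => (hxi i).1)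
            (fun i _ => (hxi i).2) hne
          simpa using this
        have hnorm : ‖∏ i, x i‖ < 1 := by
          rw [Real.norm_eq_abs, abs_of_pos ht0]
          exact ht1
        have hgeom := (hasSum_choose_mul_geometric_of_norm_lt_one (𝕜 := ℝ) (N-1) hnorm).mul_left
          (∏ i, x i ^ (U i) * (1 - x i) ^ (V i))
        have hprod : ∀ m, ∏ i, indF (U i + m) (V i) (x i)
            = (∏ i, x i ^ (U i) * (1 - x i) ^ (V i)) * (∏ i, x i) ^ m := by
          intro m
          rw [← Finset.prod_pow, ← Finset.prod_mul_distrib]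
          refine Finset.prod_congr rfl fun i _ => ?_
          rw [indF, Set.indicator_of_mem (hxi i), pow_add]
          ring
        have hfun : ∀ m, fm m x = (∏ i, x i ^ (U i) * (1 - x i) ^ (V i)) *
            ((((m+(N-1)).choose (N-1) : ℕ):ℝ) * (∏ i, x i)^m) := by
          intro m
          rw [hfm]
          simp only
          rw [hprod m]
          ring
        have hres : HasSum (fun m => fm m x)
            ((∏ i, x i ^ (U i) * (1 - x i) ^ (V i)) * (1/(1 - ∏ i, x i)^(N-1+1))) :=
          hgeom.congr_fun (fun m => by rw [hfun m])
        have hNe : N - 1 + 1 = N := by omega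
        have hval : (∏ i, x i ^ (U i) * (1 - x i) ^ (V i)) * (1/(1 - ∏ i, x i)^(N-1+1))
            = F x := by
          rw [hNe, hF]
          simp only [hU, hV]
          beta_reduce
          ring
        rw [← hval]
        exact hres
      · rw [Set.indicator_of_notMem hx]
        obtain ⟨i0, hi0⟩ : ∃ i, x i ∉ Set.Ioo (0:ℝ) 1 := by
          by_contra hall
          push_neg at hall
          exact hx ((mem_unitCube x).2 hall)
        have hzero : (fun m => fm m x) = fun _ => 0 := by
          funext m
          rw [hfm]
          simp only
          rw [Finset.prod_eq_zero (Finset.mem_univ i0) (by rw [indF, Set.indicator_of_notMem hi0]),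
            mul_zero]
        rw [hzero]
        exact hasSum_zero
    have hofReal : ∀ m, ∫⁻ x, ENNReal.ofReal (fm m x) = ENNReal.ofReal (r m) := by
      intro m
      rw [← ofReal_integral_eq_lintegral_ofReal (hfm_int m) (Filter.Eventually.of_forall (hfm_nn m)),
        hfm_val m]
    have hnnorm : ∀ m (x : Fin n → ℝ), (‖fm m x‖₊ : ENNReal) = ENNReal.ofReal (fm m x) :=
      fun m x => Real.enorm_eq_ofReal (hfm_nn m x)
    have hlint : ∫⁻ x, (‖Set.indicator (unitCube n) F x‖₊ : ENNReal)
        = ENNReal.ofReal (∑' m, r m) := by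
      have h1 : ∀ x : Fin n → ℝ, (‖Set.indicator (unitCube n) F x‖₊ : ENNReal)
          = ∑' m, ENNReal.ofReal (fm m x) := by
        intro x
        rw [← (hHasSum x).tsum_eq, ← enorm_eq_nnnorm, Real.enorm_eq_ofReal (tsum_nonneg (fun m => hfm_nn m x)),
          ENNReal.ofReal_tsum_of_nonneg (fun m => hfm_nn m x) (hHasSum x).summable]
      simp_rw [h1]
      rw [lintegral_tsum (fun m => ((hfm_meas m).ennreal_ofReal).aemeasurable)]
      simp_rw [hofReal]
      rw [← ENNReal.ofReal_tsum_of_nonneg hrnn hrsummable]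
    have hint_ind : Integrable (Set.indicator (unitCube n) F) volume := by
      refine ⟨(hFmeas.indicator hcube).aestronglyMeasurable, ?_⟩
      show (∫⁻ x, (‖Set.indicator (unitCube n) F x‖₊ : ENNReal)) < ⊤
      rw [hlint]
      exact ENNReal.ofReal_lt_top
    refine ⟨(integrable_indicator_iff hcube).1 hint_ind, ?_⟩
    have hnetop : (∑' m, ∫⁻ x, (‖fm m x‖₊ : ENNReal)) ≠ ⊤ := by
      have : ∀ m, ∫⁻ x, (‖fm m x‖₊ : ENNReal) = ENNReal.ofReal (r m) := by
        intro m
        simp_rw [hnnorm m]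
        exact hofReal m
      simp_rw [this]
      rw [← ENNReal.ofReal_tsum_of_nonneg hrnn hrsummable]
      exact ENNReal.ofReal_ne_top
    have hint_eq : ∫ x in unitCube n, F x = ∑' m, r m := by
      rw [← MeasureTheory.integral_indicator hcube]
      have hfeq : (fun x => Set.indicator (unitCube n) F x) = fun x => ∑' m, fm m x := by
        funext x
        exact ((hHasSum x).tsum_eq).symm
      calc ∫ x, Set.indicator (unitCube n) F x = ∫ x, ∑' m, fm m x := by rw [hfeq]
        _ = ∑' m, ∫ x, fm m x :=
            integral_tsum (fun m => (hfm_meas m).aestronglyMeasurable) hnetop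
        _ = ∑' m, r m := tsum_congr hfm_val
    exact ⟨a, by rw [hint_eq]; exact ha⟩
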